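/- Let L be the 3-dimensional Lie algebra over F_q with basis x, y, z, [x,y] = y, [x,z] = [y,z] = 0. For a, b, c, d ∈ F_q, the lines X_{a,b} = span(x + ay + bz) and X_{c,d} = span(x + cy + dz) generate L if and only if a ≠ c and b ≠ d. -/

import Mathlib

open Module

/-- A submodule spanned by two elements whose bracket lies in the span is
closed under the bracket. -/
lemma span_pair_lie_mem {F : Type*} [Field F] {L : Type*} [LieRing L] [LieAlgebra F L]
    (e f : L) (h : ⁅e, f⁆ ∈ Submodule.span F {e, f}) :
    ∀ p ∈ Submodule.span F {e, f}, ∀ q ∈ Submodule.span F {e, f},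
      ⁅p, q⁆ ∈ Submodule.span F ({e, f} : Set L) := by
  set S := Submodule.span F ({e, f} : Set L) with hS
  have he : e ∈ S := Submodule.subset_span (by simp)
  have hf : f ∈ S := Submodule.subset_span (by simp)
  have key : ∀ g ∈ ({e, f} : Set L), ∀ q ∈ S, ⁅g, q⁆ ∈ S := by
    intro g hg q hq
    induction hq using Submodule.span_induction with
    | mem w hw =>
      rcases hg with rfl | rfl <;> rcases hw with rfl | rfl
      · simpa using S.zero_mem
      · exact h
      · rw [← lie_skew]; exact S.neg_mem h
      · simpa using S.zero_mem
    | zero => simpa using S.zero_mem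
    | add w₁ w₂ _ _ ih1 ih2 => rw [lie_add]; exact S.add_mem ih1 ih2
    | smul t w _ ih => rw [lie_smul]; exact S.smul_mem t ih
  intro p hp q hq
  induction hp using Submodule.span_induction with
  | mem w hw => exact key w hw q hq
  | zero => simpa using S.zero_mem
  | add w₁ w₂ _ _ ih1 ih2 => rw [add_lie]; exact S.add_mem ih1 ih2
  | smul t w _ ih => rw [smul_lie]; exact S.smul_mem t ih

/-- In the solvable 3-dimensional Lie algebra with `[x,y] = y`,
`[x,z] = [y,z] = 0` over `F_q`, the lines spanned by `x + ay + bz` and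
`x + cy + dz` generate `L` iff `a ≠ c` and `b ≠ d`. -/
theorem solvable_dim3_lines_generate_iff
    (F : Type*) [Field F] [Fintype F]
    (L : Type*) [LieRing L] [LieAlgebra F L]
    (x y z : L) (hspan : Submodule.span F {x, y, z} = ⊤)
    (hdim : finrank F L = 3)
    (hxy : ⁅x, y⁆ = y) (hxz : ⁅x, z⁆ = 0) (hyz : ⁅y, z⁆ = 0)
    (a b c d : F) :
    LieSubalgebra.lieSpan F L {x + a • y + b • z, x + c • y + d • z} = ⊤ ↔
      (a ≠ c ∧ b ≠ d) := by
  classical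
  set u := x + a • y + b • z with hu
  set v := x + c • y + d • z with hv
  have hyx : ⁅y, x⁆ = -y := by rw [← lie_skew, hxy]
  have hzx : ⁅z, x⁆ = 0 := by rw [← lie_skew, hxz, neg_zero]
  have hzy : ⁅z, y⁆ = 0 := by rw [← lie_skew, hyz, neg_zero]
  have huv : ⁅u, v⁆ = (c - a) • y := by
    simp only [hu, hv, lie_add, add_lie, lie_smul, smul_lie, hxy, hxz, hyz, hyx, hzx, hzy,
      lie_self, smul_zero, smul_neg, add_zero, zero_add, smul_smul]
    module
  -- helper: a span of two elements is not everything
  have hnot_top : ∀ e f : L, Submodule.span F ({e, f} : Set L) ≠ ⊤ := by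
    intro e f
    have : Submodule.span F ({e, f} : Set L) < ⊤ := by
      apply span_lt_top_of_card_lt_finrank
      rw [hdim]
      have : ({e, f} : Set L).toFinset.card ≤ 2 := by
        rw [Set.toFinset_insert, Set.toFinset_singleton]
        exact (Finset.card_insert_le _ _).trans (by simp)
      omega
    exact this.ne
  constructor
  · intro htop
    by_contra hcon
    rw [not_and_or, not_ne_iff, not_ne_iff] at hcon
    rcases hcon with rfl | rfl
    · -- a = c : bracket is zero, span {u,v} is a subalgebra
      have hb : ⁅u, v⁆ ∈ Submodule.span F ({u, v} : Set L) := by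
        rw [huv]; simp
      set K' : LieSubalgebra F L :=
        { toSubmodule := Submodule.span F ({u, v} : Set L)
          lie_mem' := fun hp hq => span_pair_lie_mem u v hb _ hp _ hq }
      have hle : LieSubalgebra.lieSpan F L {u, v} ≤ K' := by
        rw [LieSubalgebra.lieSpan_le]
        intro w hw
        exact Submodule.subset_span hw
      rw [htop, top_le_iff] at hle
      have : (K' : Submodule F L) = ⊤ := by rw [hle]; rfl
      exact hnot_top u v this
    · -- b = d : span {u, y} is a subalgebra containing u and v
      have huy : ⁅u, y⁆ = y := by
        simp [hu, lie_add, add_lie, lie_smul, smul_lie, hxy, lie_self, hzy]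
      have hb : ⁅u, y⁆ ∈ Submodule.span F ({u, y} : Set L) := by
        rw [huy]; exact Submodule.subset_span (by simp)
      set K' : LieSubalgebra F L :=
        { toSubmodule := Submodule.span F ({u, y} : Set L)
          lie_mem' := fun hp hq => span_pair_lie_mem u y hb _ hp _ hq }
      have humem : u ∈ K' := Submodule.subset_span (by simp)
      have hymem : y ∈ K' := Submodule.subset_span (by simp)
      have hvmem : v ∈ K' := by
        have : v = u + (c - a) • y := by rw [hu, hv]; module
        rw [this]
        exact K'.add_mem humem (K'.smul_mem _ hymem)
      have hle : LieSubalgebra.lieSpan F L {u, v} ≤ K' := by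
        rw [LieSubalgebra.lieSpan_le]
        intro w hw
        rcases hw with rfl | rfl
        · exact humem
        · exact hvmem
      rw [htop, top_le_iff] at hle
      have : (K' : Submodule F L) = ⊤ := by rw [hle]; rfl
      exact hnot_top u y this
  · rintro ⟨hac, hbd⟩
    set K := LieSubalgebra.lieSpan F L {u, v} with hK
    have humem : u ∈ K := LieSubalgebra.subset_lieSpan (by simp)
    have hvmem : v ∈ K := LieSubalgebra.subset_lieSpan (by simp)
    have hymem : y ∈ K := by
      have h1 : ⁅u, v⁆ ∈ K := K.lie_mem humem hvmem
      rw [huv] at h1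
      have h2 : (c - a)⁻¹ • ((c - a) • y) ∈ K := K.smul_mem _ h1
      rwa [smul_smul, inv_mul_cancel₀ (sub_ne_zero.mpr (Ne.symm hac)), one_smul] at h2
    have hzmem : z ∈ K := by
      have h1 : u - v ∈ K := K.sub_mem humem hvmem
      have h2 : u - v - (a - c) • y ∈ K := K.sub_mem h1 (K.smul_mem _ hymem)
      have h3 : u - v - (a - c) • y = (b - d) • z := by
        rw [hu, hv]; module
      rw [h3] at h2
      have h4 : (b - d)⁻¹ • ((b - d) • z) ∈ K := K.smul_mem _ h2
      rwa [smul_smul, inv_mul_cancel₀ (sub_ne_zero.mpr hbd), one_smul] at h4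
    have hxmem : x ∈ K := by
      have h1 : u - a • y - b • z ∈ K :=
        K.sub_mem (K.sub_mem humem (K.smul_mem _ hymem)) (K.smul_mem _ hzmem)
      have h2 : u - a • y - b • z = x := by rw [hu]; module
      rwa [h2] at h1
    rw [← LieSubalgebra.toSubmodule_inj, LieSubalgebra.top_toSubmodule, eq_top_iff,
      ← hspan]
    rw [Submodule.span_le]
    intro w hw
    rcases hw with rfl | rfl | rfl
    · exact hxmem
    · exact hymem
    · exact hzmem
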